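/- For every k ≥ 0: for each integer i with 1 ≤ i ≤ ⌊k/2⌋, the square (2i ⊕ W_{k-2i})² (of period |W_{k-2i}| = f_{k-2i+2}) is a factor of W_{k+1} but is not a factor of W_k; moreover, every square factor of W_{k+1} that is not a factor of W_k equals (2i ⊕ W_{k-2i})² for some i with 1 ≤ i ≤ ⌊k/2⌋. -/

import Mathlib

/-- The morphism `phi` on the alphabet `ℕ`: `phi (2i) = (2i)(2i+1)` and `phi (2i+1) = (2i+2)`. -/
def phi (a : ℕ) : List ℕ := if a % 2 = 0 then [a, a + 1] else [a + 1]

/-- The finite ZWW words: `W n = phi^n(0)`, so `W 0 = 0`, `W 1 = 01`, `W 2 = 012`, `W 3 = 01223`. -/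
def W (n : ℕ) : List ℕ := (fun w => w.flatMap phi)^[n] [0]

lemma W_succ (n : ℕ) : W (n+1) = (W n).flatMap phi := by
  simp [W, Function.iterate_succ_apply']

lemma W0 : W 0 = [0] := rfl
lemma W1 : W 1 = [0,1] := by decide
lemma W2 : W 2 = [0,1,2] := by decide

lemma phi_add_two (a : ℕ) : phi (a+2) = (phi a).map (· + 2) := by
  unfold phi
  rcases Nat.even_or_odd a with h | h
  · have : a % 2 = 0 := Nat.even_iff.mp h
    simp [Nat.add_mod_right, this]
  · have : a % 2 = 1 := Nat.odd_iff.mp h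
    simp [Nat.add_mod_right, this]

lemma flatMap_phi_map (l : List ℕ) :
    (l.map (· + 2)).flatMap phi = (l.flatMap phi).map (· + 2) := by
  induction l with
  | nil => simp
  | cons a l ih => simp [List.flatMap_cons, ih, phi_add_two]

lemma W_rec (n : ℕ) : W (n+2) = W (n+1) ++ (W n).map (· + 2) := by
  induction n with
  | zero => decide
  | succ n ih =>
    rw [W_succ (n+2), ih, List.flatMap_append, flatMap_phi_map, ← W_succ]
    rw [show n+1+1 = n+2 from rfl, ih, ← W_succ]

lemma len_W (n : ℕ) : (W n).length = Nat.fib (n+2) := by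
  induction n using Nat.twoStepInduction with
  | zero => decide
  | one => decide
  | more n ih1 ih2 => rw [W_rec]; simp [ih1, ih2, Nat.fib_add_two]; omega

lemma W_ne_nil (n : ℕ) : W n ≠ [] := by
  have := len_W n
  have h2 : 0 < Nat.fib (n+2) := Nat.fib_pos.mpr (by omega)
  intro h; rw [h] at this; simp at this; omega

lemma len_W_strictMono : StrictMono (fun n => (W n).length) := by
  apply strictMono_nat_of_lt_succ
  intro n
  match n with
  | 0 => decide
  | n+1 =>
    rw [W_rec]
    simp only [List.length_append, List.length_map]
    have h1 : 0 < (W n).length := List.length_pos_iff.mpr (W_ne_nil n)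
    omega

lemma W_prefix (n : ℕ) : W n <+: W (n+1) := by
  match n with
  | 0 => decide
  | n+1 => rw [W_rec]; exact List.prefix_append _ _

lemma W_prefix_le {a b : ℕ} (h : a ≤ b) : W a <+: W b := by
  induction b with
  | zero =>
    have : a = 0 := by omega
    simp [this]
  | succ b ih =>
    rcases Nat.lt_or_ge a (b+1) with h' | h'
    · exact (ih (by omega)).trans (W_prefix b)
    · have : a = b + 1 := by omega
      simp [this]

lemma W_last? (n : ℕ) : (W n).getLast? = some n := by
  induction n using Nat.twoStepInduction with
  | zero => decide
  | one => decide
  | more n ih1 ih2 =>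
    obtain ⟨l', hl'⟩ : ∃ l', W n = l' ++ [n] := List.getLast?_eq_some_iff.mp ih1
    rw [W_rec, hl']
    simp

lemma W_last (n : ℕ) (h : (W n).length - 1 < (W n).length) : (W n)[(W n).length - 1] = n := by
  have h2 := W_last? n
  rw [List.getLast?_eq_getLast (W_ne_nil n), Option.some_inj,
    List.getLast_eq_getElem] at h2
  exact h2

/-- `X n = W 0 ++ W 1 ++ ⋯ ++ W (n-1)`. -/
def X : ℕ → List ℕ
  | 0 => []
  | n+1 => X n ++ W n

/-- `R a = |X a|`, the starting position of block `W a` in `X n` for `a < n`. -/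
def R : ℕ → ℕ
  | 0 => 0
  | a+1 => R a + (W a).length

lemma len_X (n : ℕ) : (X n).length = R n := by
  induction n with
  | zero => rfl
  | succ n ih => simp [X, R, ih]

lemma R_strictMono : StrictMono R := by
  apply strictMono_nat_of_lt_succ
  intro n
  have := List.length_pos_iff.mpr (W_ne_nil n)
  simp [R]; omega

lemma X_prefix_le {a b : ℕ} (h : a ≤ b) : X a <+: X b := by
  induction b with
  | zero =>
    have : a = 0 := by omega
    simp [this]
  | succ b ih =>
    rcases Nat.lt_or_ge a (b+1) with h' | h'
    · exact (ih (by omega)).trans ⟨W b, rfl⟩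
    · have : a = b + 1 := by omega
      simp [this]

lemma X_block {n a : ℕ} (h : a < n) : ∃ t, X n = X a ++ W a ++ t := by
  induction n with
  | zero => omega
  | succ n ih =>
    rcases Nat.lt_or_ge a n with h' | h'
    · obtain ⟨t, ht⟩ := ih h'
      exact ⟨t ++ W n, by simp [X, ht]⟩
    · have : a = n := by omega
      subst this
      exact ⟨[], by simp [X]⟩

lemma getElem_of_opt {α : Type*} {l : List α} {i : ℕ} {a : α} (h : l[i]? = some a)
    (hi : i < l.length) : l[i] = a := by
  rw [List.getElem?_eq_getElem hi] at h
  exact Option.some_inj.mp h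

lemma getElem_mid {α : Type*} (s u t : List α) (j : ℕ) (hj : j < u.length)
    (hb : s.length + j < (s ++ u ++ t).length) :
    (s ++ u ++ t)[s.length + j] = u[j] := by
  have h1 : (s ++ u ++ t)[s.length + j]? = u[j]? := by
    rw [List.append_assoc, List.getElem?_append_right (by omega),
      List.getElem?_append]
    simp only [show s.length + j - s.length = j by omega]
    rw [if_pos hj]
  rw [List.getElem?_eq_getElem hb, List.getElem?_eq_getElem hj] at h1
  exact Option.some_inj.mp h1

lemma getX_block {n a p : ℕ} (ha : a < n) (hp : p < (W a).length)
    (hb : R a + p < (X n).length) :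
    (X n)[R a + p] = (W a)[p] := by
  obtain ⟨t, ht⟩ := X_block ha
  have h1 : (X n)[R a + p]? = (W a)[p]? := by
    rw [ht, ← len_X a]
    rw [List.append_assoc, List.getElem?_append_right (by rw [len_X]; omega),
      List.getElem?_append]
    rw [len_X]
    simp only [show R a + p - R a = p by omega]
    rw [if_pos hp]
  rw [List.getElem?_eq_getElem hb, List.getElem?_eq_getElem hp] at h1
  exact Option.some_inj.mp h1

lemma R_add_lt {n a p : ℕ} (ha : a < n) (hp : p < (W a).length) :
    R a + p < (X n).length := by
  rw [len_X]
  have h1 : R a + p < R (a+1) := by simp [R]; omega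
  have h2 : R (a+1) ≤ R n := R_strictMono.le_iff_le.mpr (by omega)
  omega

lemma W_head (a : ℕ) (h : 0 < (W a).length) : (W a)[0] = 0 := by
  obtain ⟨t, ht⟩ := W_prefix_le (show 0 ≤ a by omega)
  apply getElem_of_opt _ h
  rw [← ht, W0]
  simp

lemma X_zero {n a : ℕ} (ha : a < n) (hb : R a < (X n).length) : (X n)[R a] = 0 := by
  have h0 : 0 < (W a).length := List.length_pos_iff.mpr (W_ne_nil a)
  have h := getX_block (p := 0) ha h0 (by omega)
  simp only [Nat.add_zero] at h
  rw [h, W_head a h0]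

lemma X_last {n a : ℕ} (ha : a < n) (hb : R (a+1) - 1 < (X n).length) :
    (X n)[R (a+1) - 1] = a := by
  have h0 : 0 < (W a).length := List.length_pos_iff.mpr (W_ne_nil a)
  have he : R (a+1) - 1 = R a + ((W a).length - 1) := by simp [R]; omega
  have hb2 : R a + ((W a).length - 1) < (X n).length := by omega
  have h := getX_block (p := (W a).length - 1) ha (by omega) hb2
  apply getElem_of_opt (a := a) _ hb
  rw [he, List.getElem?_eq_getElem hb2, h, W_last a (by omega)]

lemma drop2 (n : ℕ) : (W (n+2)).drop 2 = (X (n+1)).map (· + 2) := by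
  induction n with
  | zero => decide
  | succ n ih =>
    have h2 : 2 ≤ (W (n+2)).length := by
      rw [len_W]
      have := Nat.fib_le_fib_succ (n := 3)
      have : Nat.fib 3 ≤ Nat.fib (n + 4) := Nat.fib_mono (by omega)
      simp [Nat.fib] at this ⊢
      omega
    rw [W_rec (n+1), List.drop_append_of_le_length h2, ih, show X (n+2) = X (n+1) ++ W (n+1) from rfl]
    simp

lemma W_eq_01 (n : ℕ) : W (n+2) = 0 :: 1 :: (X (n+1)).map (· + 2) := by
  obtain ⟨t, ht⟩ := W_prefix_le (show 1 ≤ n + 2 by omega)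
  have h1 : W 1 = [0, 1] := W1
  have hd : (W (n+2)).drop 2 = t := by rw [← ht, h1]; simp
  rw [← ht, h1, ← hd, drop2]
  rfl

lemma opt_of_getElem {α : Type*} {l : List α} {p : ℕ} {v : α} (hp : p < l.length)
    (h : l[p] = v) : l[p]? = some v := by
  rw [List.getElem?_eq_getElem hp, h]

lemma W_zero_iff {n p : ℕ} (hp : p < (W n).length) : (W n)[p] = 0 ↔ p = 0 := by
  constructor
  · intro h
    have h? : (W n)[p]? = some 0 := opt_of_getElem hp h
    match n with
    | 0 =>
      rw [W0] at h?
      match p with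
      | 0 => rfl
      | p+1 => simp at h?
    | 1 =>
      rw [W1] at h?
      match p with
      | 0 => rfl
      | 1 => simp at h?
      | p+2 => simp at h?
    | (n+2) =>
      rw [W_eq_01 n] at h?
      match p with
      | 0 => rfl
      | 1 => simp at h?
      | (p+2) =>
        simp only [List.getElem?_cons_succ, List.getElem?_map] at h?
        rcases hx : (X (n+1))[p]? with _ | x <;> rw [hx] at h? <;> simp at h?
  · intro h; subst h; exact W_head n (by omega)

lemma W_one_imp {n p : ℕ} (hp : p < (W n).length) (h : (W n)[p] = 1) : p = 1 := by
  have h? : (W n)[p]? = some 1 := opt_of_getElem hp h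
  match n with
  | 0 =>
    rw [W0] at h?
    match p with
    | 0 => simp at h?
    | p+1 => simp at h?
  | 1 =>
    rw [W1] at h?
    match p with
    | 0 => simp at h?
    | 1 => rfl
    | p+2 => simp at h?
  | (n+2) =>
    rw [W_eq_01 n] at h?
    match p with
    | 0 => simp at h?
    | 1 => rfl
    | (p+2) =>
      simp only [List.getElem?_cons_succ, List.getElem?_map] at h?
      rcases hx : (X (n+1))[p]? with _ | x <;> rw [hx] at h? <;> simp at h?

lemma X_zero_char : ∀ {n p : ℕ} (hp : p < (X n).length), (X n)[p] = 0 → ∃ a, a < n ∧ p = R a := by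
  intro n
  induction n with
  | zero => intro p hp; simp [X] at hp
  | succ n ih =>
    intro p hp h
    have h? : (X (n+1))[p]? = some 0 := opt_of_getElem hp h
    have hx : X (n+1) = X n ++ W n := rfl
    rw [hx, List.getElem?_append] at h?
    rcases Nat.lt_or_ge p (X n).length with h' | h'
    · rw [if_pos h'] at h?
      rw [List.getElem?_eq_getElem h'] at h?
      obtain ⟨a, ha, hpa⟩ := ih h' (Option.some_inj.mp h?)
      exact ⟨a, by omega, hpa⟩
    · rw [if_neg (by omega)] at h?
      have hlt : p - (X n).length < (W n).length := by
        rw [hx] at hp; simp at hp; omega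
      rw [List.getElem?_eq_getElem hlt] at h?
      have := (W_zero_iff hlt).mp (Option.some_inj.mp h?)
      exact ⟨n, by omega, by rw [← len_X]; omega⟩

lemma X_one_char : ∀ {n p : ℕ} (hp : p < (X n).length), (X n)[p] = 1 → ∃ a, a < n ∧ p = R a + 1 := by
  intro n
  induction n with
  | zero => intro p hp; simp [X] at hp
  | succ n ih =>
    intro p hp h
    have h? : (X (n+1))[p]? = some 1 := opt_of_getElem hp h
    have hx : X (n+1) = X n ++ W n := rfl
    rw [hx, List.getElem?_append] at h?
    rcases Nat.lt_or_ge p (X n).length with h' | h'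
    · rw [if_pos h'] at h?
      rw [List.getElem?_eq_getElem h'] at h?
      obtain ⟨a, ha, hpa⟩ := ih h' (Option.some_inj.mp h?)
      exact ⟨a, by omega, hpa⟩
    · rw [if_neg (by omega)] at h?
      have hlt : p - (X n).length < (W n).length := by
        rw [hx] at hp; simp at hp; omega
      rw [List.getElem?_eq_getElem hlt] at h?
      have := W_one_imp hlt (Option.some_inj.mp h?)
      exact ⟨n, by omega, by rw [← len_X]; omega⟩

lemma X_one_prev {n p : ℕ} (hp : p < (X n).length) (h : (X n)[p] = 1) :
    1 ≤ p ∧ (X n)[p-1]'(by omega) = 0 := by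
  obtain ⟨a, ha, hpa⟩ := X_one_char hp h
  subst hpa
  refine ⟨by omega, ?_⟩
  simp only [Nat.add_sub_cancel]
  exact X_zero ha (by omega)

lemma getElem?_mid {α : Type*} (s u t : List α) (j : ℕ) (hj : j < u.length) :
    (s ++ u ++ t)[s.length + j]? = u[j]? := by
  rw [List.append_assoc, List.getElem?_append_right (by omega), List.getElem?_append]
  simp only [show s.length + j - s.length = j by omega]
  rw [if_pos hj]

lemma opt_eq {α : Type*} {l : List α} {i j : ℕ} {x y : α} (hi : l[i]? = some x)
    (hj : l[j]? = some y) (hij : i = j) : x = y := by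
  subst hij
  rw [hi] at hj
  exact Option.some_inj.mp hj

lemma X_zero? {n a : ℕ} (ha : a < n) (hb : R a < (X n).length) :
    (X n)[R a]? = some 0 :=
  opt_of_getElem hb (X_zero ha hb)

lemma X_zero_char? {n p : ℕ} (h : (X n)[p]? = some 0) : ∃ a, a < n ∧ p = R a := by
  obtain ⟨hp, hval⟩ := List.getElem?_eq_some_iff.mp h
  exact X_zero_char hp hval

lemma X_one_char? {n p : ℕ} (h : (X n)[p]? = some 1) : ∃ a, a < n ∧ p = R a + 1 := by
  obtain ⟨hp, hval⟩ := List.getElem?_eq_some_iff.mp h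
  exact X_one_char hp hval

lemma X_last? {n a : ℕ} (ha : a < n) (hb : R (a+1) - 1 < (X n).length) :
    (X n)[R (a+1) - 1]? = some a :=
  opt_of_getElem hb (X_last ha hb)

lemma opt_lt_length {α : Type*} {l : List α} {p : ℕ} {x : α} (h : l[p]? = some x) :
    p < l.length :=
  (List.getElem?_eq_some_iff.mp h).1

lemma consec_zeros {n p p' : ℕ} (h0 : (X n)[p]? = some 0) (h0' : (X n)[p']? = some 0)
    (hlt : p < p')
    (hbetween : ∀ q, p < q → q < p' → (X n)[q]? ≠ some 0) :
    ∃ a, a + 1 < n ∧ p = R a ∧ p' = R (a+1) := by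
  obtain ⟨a, ha, hpa⟩ := X_zero_char? h0
  obtain ⟨b, hb, hpb⟩ := X_zero_char? h0'
  have hab : a < b := by
    by_contra hc
    have : R b ≤ R a := R_strictMono.le_iff_le.mpr (by omega)
    omega
  rcases Nat.lt_or_ge (a+1) b with hc | hc
  · exfalso
    have h1 : R (a+1) < R b := R_strictMono hc
    have h2 : R a < R (a+1) := R_strictMono (by omega)
    have hq : R (a+1) < (X n).length := by
      have := opt_lt_length h0'
      omega
    exact hbetween (R (a+1)) (by omega) (by omega) (X_zero? (by omega) hq)
  · have : b = a + 1 := by omega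
    subst this
    exact ⟨a, by omega, hpa, hpb⟩

set_option maxHeartbeats 1000000 in
lemma low_square {n : ℕ} {v : List ℕ} (hv : v ≠ []) (h0 : 0 ∈ v ∨ 1 ∈ v)
    (h : v ++ v <:+: X n) : ∃ a, a + 1 < n ∧ v = W a := by
  obtain ⟨s, t, hst⟩ := h
  have hL : 0 < v.length := List.length_pos_iff.mpr hv
  have hlen : s.length + (v.length + v.length) + t.length = (X n).length := by
    have := congrArg List.length hst
    simp only [List.length_append] at this
    omega
  have hv1 : ∀ j (hj : j < v.length), (X n)[s.length + j]? = some (v[j]) := by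
    intro j hj
    rw [← hst, getElem?_mid s (v ++ v) t j (by simp; omega),
      List.getElem?_append, if_pos hj, List.getElem?_eq_getElem hj]
  have hv2 : ∀ j (hj : j < v.length),
      (X n)[s.length + v.length + j]? = some (v[j]) := by
    intro j hj
    rw [show s.length + v.length + j = s.length + (v.length + j) by omega,
      ← hst, getElem?_mid s (v ++ v) t (v.length + j) (by simp; omega),
      List.getElem?_append_right (by omega)]
    simp only [show v.length + j - v.length = j by omega]
    rw [List.getElem?_eq_getElem hj]
  -- v contains a zero
  have h00 : 0 ∈ v := by
    rcases h0 with h0 | h0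
    · exact h0
    · obtain ⟨j1, hj1, hj1v⟩ := List.mem_iff_getElem.mp h0
      rcases Nat.eq_zero_or_pos j1 with hz | hz
      · subst hz
        have hx1 : (X n)[s.length + v.length + 0]? = some 1 := by
          rw [hv2 0 hL, hj1v]
        obtain ⟨a, han, hpa⟩ := X_one_char? hx1
        have hz2 : (X n)[R a]? = some 0 := X_zero? han (by omega)
        have : v[v.length - 1]'(by omega) = 0 :=
          opt_eq (hv1 (v.length - 1) (by omega)) hz2 (by omega)
        exact this ▸ List.getElem_mem _
      · have hx1 : (X n)[s.length + j1]? = some 1 := by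
          rw [hv1 j1 hj1, hj1v]
        obtain ⟨a, han, hpa⟩ := X_one_char? hx1
        have hz2 : (X n)[R a]? = some 0 := X_zero? han (by omega)
        have : v[j1 - 1]'(by omega) = 0 :=
          opt_eq (hv1 (j1 - 1) (by omega)) hz2 (by omega)
        exact this ▸ List.getElem_mem _
  -- uniqueness of the zero in v
  have huniq : ∀ j j' (hj : j < v.length) (hj' : j' < v.length),
      v[j] = 0 → v[j'] = 0 → j = j' := by
    have key : ∀ j j' (hj : j < v.length) (hj' : j' < v.length), j < j' →
        v[j] = 0 → v[j'] = 0 → False := by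
      intro j j' hj hj' hlt hz hz'
      have hex : ∃ k, j < k ∧ v[k]? = some 0 :=
        ⟨j', hlt, opt_of_getElem hj' hz'⟩
      obtain ⟨j2, hj2def⟩ : ∃ m, Nat.find hex = m := ⟨_, rfl⟩
      have hspec := Nat.find_spec hex
      rw [hj2def] at hspec
      obtain ⟨hjj2, hj2v⟩ := hspec
      obtain ⟨hj2L, hj2z⟩ := List.getElem?_eq_some_iff.mp hj2v
      have hmin : ∀ k, j < k → k < j2 → (hk : k < v.length) → v[k] ≠ 0 := by
        intro k hk1 hk2 hk hkz
        exact Nat.find_min hex (by omega) ⟨hk1, opt_of_getElem hk hkz⟩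
      have hza : (X n)[s.length + j]? = some 0 := by rw [hv1 j hj, hz]
      have hza' : (X n)[s.length + j2]? = some 0 := by rw [hv1 j2 hj2L, hj2z]
      have hzc : (X n)[s.length + v.length + j]? = some 0 := by
        rw [hv2 j hj, hz]
      have hzc' : (X n)[s.length + v.length + j2]? = some 0 := by
        rw [hv2 j2 hj2L, hj2z]
      obtain ⟨a, han, hpa, hpa'⟩ := consec_zeros hza hza' (by omega) (by
        intro q hq1 hq2 hqz
        have hjq : q - s.length < v.length := by omega
        have : v[q - s.length]'hjq = 0 :=
          opt_eq (hv1 (q - s.length) hjq) hqz (by omega)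
        exact hmin (q - s.length) (by omega) (by omega) hjq this)
      obtain ⟨c, hcn, hpc, hpc'⟩ := consec_zeros hzc hzc' (by omega) (by
        intro q hq1 hq2 hqz
        have hjq : q - s.length - v.length < v.length := by omega
        have : v[q - s.length - v.length]'hjq = 0 :=
          opt_eq (hv2 (q - s.length - v.length) hjq) hqz (by omega)
        exact hmin (q - s.length - v.length) (by omega) (by omega) hjq this)
      have hga : R (a+1) = R a + (W a).length := rfl
      have hgc : R (c+1) = R c + (W c).length := rfl
      have hWac : (W a).length = (W c).length := by omega
      have hac : a = c := len_W_strictMono.injective hWac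
      subst hac
      omega
    intro j j' hj hj' hz hz'
    rcases Nat.lt_trichotomy j j' with h | h | h
    · exact absurd (key j j' hj hj' h hz hz') (by simp)
    · exact h
    · exact absurd (key j' j hj' hj h hz' hz) (by simp)
  obtain ⟨j0, hj0L, hj0v⟩ := List.mem_iff_getElem.mp h00
  -- locate the two zeros of vv as consecutive block starts
  have hza : (X n)[s.length + j0]? = some 0 := by rw [hv1 j0 hj0L, hj0v]
  have hza' : (X n)[s.length + v.length + j0]? = some 0 := by
    rw [hv2 j0 hj0L, hj0v]
  obtain ⟨a, han, hpa, hpa'⟩ := consec_zeros hza hza' (by omega) (by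
    intro q hq1 hq2 hqz
    rcases Nat.lt_or_ge (q - s.length) v.length with hcase | hcase
    · have : v[q - s.length]'hcase = 0 :=
        opt_eq (hv1 (q - s.length) hcase) hqz (by omega)
      have := huniq _ _ hcase hj0L this hj0v
      omega
    · have hjq : q - s.length - v.length < v.length := by omega
      have : v[q - s.length - v.length]'hjq = 0 :=
        opt_eq (hv2 (q - s.length - v.length) hjq) hqz (by omega)
      have := huniq _ _ hjq hj0L this hj0v
      omega)
  have hga : R (a+1) = R a + (W a).length := rfl
  have hWaL : (W a).length = v.length := by omega
  -- the zero is at the start of v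
  have hj00 : j0 = 0 := by
    by_contra hne
    have hj0pos : 1 ≤ j0 := by omega
    have hapos : 1 ≤ a := by
      rcases Nat.eq_zero_or_pos a with h' | h'
      · exfalso; subst h'; simp [R] at hpa; omega
      · exact h'
    have hga' : R a = R (a-1) + (W (a-1)).length := by
      rw [show a = a - 1 + 1 by omega]
      rfl
    have hl1 : (X n)[R (a-1+1) - 1]? = some (a-1) :=
      X_last? (by omega) (by rw [show a - 1 + 1 = a by omega]; omega)
    rw [show a - 1 + 1 = a by omega] at hl1
    have hl2 : (X n)[R (a+1) - 1]? = some a :=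
      X_last? (by omega) (by omega)
    have hv1' : v[j0 - 1]'(by omega) = a - 1 :=
      opt_eq (hv1 (j0 - 1) (by omega)) hl1 (by omega)
    have hv2' : v[j0 - 1]'(by omega) = a :=
      opt_eq (hv2 (j0 - 1) (by omega)) hl2 (by omega)
    rw [hv1'] at hv2'
    omega
  subst hj00
  have hsa : s.length = R a := by omega
  refine ⟨a, han, ?_⟩
  apply List.ext_getElem (by omega)
  intro j hj1 hj2
  have hbX : R a + j < (X n).length := by omega
  have h3 : (X n)[R a + j]? = some ((W a)[j]'hj2) :=
    opt_of_getElem hbX (getX_block (by omega) hj2 hbX)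
  exact opt_eq (hv1 j hj1) h3 (by omega)

lemma infix_append_split {α : Type*} {u x y : List α} (h : u <:+: x ++ y) :
    u <:+: x ∨ u <:+: y ∨ ∃ u1 u2, u = u1 ++ u2 ∧ u1 <:+ x ∧ u2 <+: y := by
  obtain ⟨s, t, h⟩ := h
  rw [show s ++ u ++ t = (s ++ u) ++ t by simp] at h
  rcases List.append_eq_append_iff.mp h with ⟨a', ha1, ha2⟩ | ⟨c', hc1, hc2⟩
  · left
    exact ⟨s, a', by rw [ha1]⟩
  · rcases List.append_eq_append_iff.mp hc1 with ⟨a₂, hb1, hb2⟩ | ⟨c₂, hd1, hd2⟩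
    · right; right
      exact ⟨a₂, c', hb2, ⟨s, hb1.symm⟩, ⟨t, hc2.symm⟩⟩
    · right; left
      exact ⟨c₂, t, by rw [hc2, hd2]⟩

lemma infix_cons_peel {α : Type*} {a : α} {u l : List α}
    (h : u <:+: a :: l) (ha : a ∉ u) : u <:+: l := by
  obtain ⟨s, t, h⟩ := h
  cases s with
  | nil =>
    simp only [List.nil_append] at h
    cases u with
    | nil => exact List.nil_infix
    | cons b u' =>
      rw [List.cons_append] at h
      injection h with h1 h2
      exact absurd (h1 ▸ (List.mem_cons_self : b ∈ b :: u')) ha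
  | cons b s' =>
    rw [List.cons_append, List.cons_append] at h
    injection h with h1 h2
    exact ⟨s', t, h2⟩

lemma infix_map_decomp {α β : Type*} {f : α → β} {u : List β} {l : List α}
    (h : u <:+: l.map f) : ∃ u', u' <:+: l ∧ u = u'.map f := by
  obtain ⟨s, t, h⟩ := h
  rw [List.append_assoc] at h
  obtain ⟨l₁, l₂, hl, hm1, hm2⟩ := List.map_eq_append_iff.mp h.symm
  obtain ⟨l₃, l₄, hl', hm3, hm4⟩ := List.map_eq_append_iff.mp hm2
  exact ⟨l₃, ⟨l₁, l₄, by rw [hl, hl']; simp⟩, hm3.symm⟩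

lemma map_add_two_inj {u w : List ℕ} (h : u.map (· + 2) = w.map (· + 2)) : u = w :=
  List.map_injective_iff.mpr (fun a b hab => by omega) h

lemma map_X_infix_W (n : ℕ) : (X (n+1)).map (· + 2) <:+: W (n+2) := by
  rw [← drop2]
  exact (List.drop_suffix 2 _).isInfix

lemma W_infix_X (n : ℕ) : W n <:+: X (n+1) :=
  (show W n <:+ X n ++ W n from ⟨X n, rfl⟩).isInfix

lemma X_infix_le {a b : ℕ} (h : a ≤ b) : X a <:+: X b :=
  (X_prefix_le h).isInfix

lemma W_head_cons (n : ℕ) : ∃ w', W n = 0 :: w' := by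
  obtain ⟨t', ht'⟩ := W_prefix_le (show 0 ≤ n by omega)
  exact ⟨t', by rw [← ht', W0]; rfl⟩

lemma high_infix_W {n : ℕ} {u : List ℕ} (hu : ∀ x ∈ u, 2 ≤ x)
    (h : u <:+: W (n+2)) : u <:+: (X (n+1)).map (· + 2) := by
  rw [W_eq_01] at h
  have h0 : (0:ℕ) ∉ u := fun hc => by have := hu 0 hc; omega
  have h1 : (1:ℕ) ∉ u := fun hc => by have := hu 1 hc; omega
  exact infix_cons_peel (infix_cons_peel h h0) h1

lemma high_X : ∀ n : ℕ, ∀ u : List ℕ, u ≠ [] → (∀ x ∈ u, 2 ≤ x) →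
    u <:+: X n → 3 ≤ n ∧ u <:+: (X (n-2)).map (· + 2) := by
  intro n
  induction n with
  | zero =>
    intro u hne hu h
    rw [show X 0 = [] from rfl, List.infix_nil] at h
    exact absurd h hne
  | succ n ih =>
    intro u hne hu h
    have hcase1 : u <:+: X n → 3 ≤ n + 1 ∧ u <:+: (X (n+1-2)).map (· + 2) := by
      intro h'
      obtain ⟨h3, h4⟩ := ih u hne hu h'
      refine ⟨by omega, ?_⟩
      have hpre : X (n-2) <+: X (n-1) := X_prefix_le (by omega)
      have : (X (n-2)).map (· + 2) <+: (X (n-1)).map (· + 2) := hpre.map _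
      rw [show n + 1 - 2 = n - 1 by omega]
      exact h4.trans this.isInfix
    have hcase2 : u <:+: W n → 3 ≤ n + 1 ∧ u <:+: (X (n+1-2)).map (· + 2) := by
      intro h'
      match n with
      | 0 =>
        exfalso
        rw [W0] at h'
        have h0 : (0:ℕ) ∉ u := fun hc => by have := hu 0 hc; omega
        have := infix_cons_peel h' h0
        rw [List.infix_nil] at this
        exact hne this
      | 1 =>
        exfalso
        rw [W1] at h'
        have h0 : (0:ℕ) ∉ u := fun hc => by have := hu 0 hc; omega
        have h1 : (1:ℕ) ∉ u := fun hc => by have := hu 1 hc; omega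
        have := infix_cons_peel (infix_cons_peel h' h0) h1
        rw [List.infix_nil] at this
        exact hne this
      | (m+2) =>
        refine ⟨by omega, ?_⟩
        rw [show m + 2 + 1 - 2 = m + 1 by omega]
        exact high_infix_W hu h'
    rcases infix_append_split (show u <:+: X n ++ W n from h) with h' | h' | h'
    · exact hcase1 h'
    · exact hcase2 h'
    · obtain ⟨u1, u2, hu12, hsuf, hpre⟩ := h'
      cases u2 with
      | nil =>
        rw [List.append_nil] at hu12
        subst hu12
        exact hcase1 hsuf.isInfix
      | cons b u2' =>
        exfalso
        obtain ⟨r, hr⟩ := hpre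
        obtain ⟨w', hw'⟩ := W_head_cons n
        rw [hw'] at hr
        have hb : b = 0 := by
          rw [List.cons_append] at hr
          injection hr with h1 h2
        have : (0:ℕ) ∈ u := by
          rw [hu12, hb]
          exact List.mem_append_right u1 (List.mem_cons_self : (0:ℕ) ∈ 0 :: u2')
        have := hu 0 this
        omega

lemma sq_in_X (a : ℕ) : (W a ++ W a) <:+: X (a+2) := by
  obtain ⟨d, hd⟩ := W_prefix a
  refine ⟨X a, d, ?_⟩
  rw [show X (a+2) = X a ++ W a ++ W (a+1) from by simp [X], ← hd]
  simp

/-- The square `(2j ⊕ W b)²`. -/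
def Sq (j b : ℕ) : List ℕ := (W b).map (· + 2*j) ++ (W b).map (· + 2*j)

lemma Sq_zero (b : ℕ) : Sq 0 b = W b ++ W b := by simp [Sq]

lemma map_shift_comp (j : ℕ) (l : List ℕ) :
    (l.map (· + 2*j)).map (· + 2) = l.map (· + 2*(j+1)) := by
  rw [List.map_map]
  exact List.map_congr_left (fun x _ => by simp [Function.comp]; omega)

lemma Sq_succ (j b : ℕ) : (Sq j b).map (· + 2) = Sq (j+1) b := by
  simp only [Sq, List.map_append, map_shift_comp]

lemma Sq_ne_nil (j b : ℕ) : Sq j b ≠ [] := by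
  simp [Sq, W_ne_nil b]

lemma Sq_high {j b : ℕ} (hj : 1 ≤ j) : ∀ x ∈ Sq j b, 2 ≤ x := by
  intro x hx
  simp only [Sq, List.mem_append, List.mem_map] at hx
  rcases hx with ⟨y, _, hy⟩ | ⟨y, _, hy⟩ <;> omega

lemma ExistX : ∀ j m : ℕ, 2*j + 1 ≤ m →
    Sq j (m-1-2*j) <:+: X (m+1) ∧ ¬ Sq j (m-1-2*j) <:+: X m := by
  intro j
  induction j with
  | zero =>
    intro m hm
    rw [show m - 1 - 2*0 = m - 1 by omega, Sq_zero]
    constructor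
    · have := sq_in_X (m-1)
      rw [show m - 1 + 2 = m + 1 by omega] at this
      exact this
    · intro hc
      obtain ⟨c, hc1, hc2⟩ := low_square (W_ne_nil (m-1))
        (Or.inl (by obtain ⟨w', hw'⟩ := W_head_cons (m-1); rw [hw']; simp)) hc
      have := len_W_strictMono.injective (by rw [hc2] : (W (m-1)).length = (W c).length)
      omega
  | succ j ih =>
    intro m hm
    have hb : m - 1 - 2*(j+1) = (m-2) - 1 - 2*j := by omega
    obtain ⟨ih1, ih2⟩ := ih (m-2) (by omega)
    rw [show m - 2 + 1 = m - 1 by omega] at ih1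
    constructor
    · rw [hb, ← Sq_succ]
      have h1 : (Sq j (m-2-1-2*j)).map (· + 2) <:+: (X (m-1)).map (· + 2) :=
        List.IsInfix.map _ ih1
      have h2 : (X (m-1)).map (· + 2) <:+: W m := by
        have := map_X_infix_W (m-2)
        rw [show m - 2 + 1 = m - 1 by omega, show m - 2 + 2 = m by omega] at this
        exact this
      exact (h1.trans h2).trans (W_infix_X m)
    · intro hc
      rw [hb] at hc
      obtain ⟨h3, h4⟩ := high_X m _ (Sq_ne_nil _ _) (Sq_high (by omega)) hc
      obtain ⟨u', hu', hequ⟩ := infix_map_decomp h4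
      rw [← Sq_succ] at hequ
      have := map_add_two_inj hequ
      rw [← this] at hu'
      exact ih2 hu'

lemma X1 : X 1 = [0] := rfl

lemma CompX : ∀ m : ℕ, 1 ≤ m → ∀ u : List ℕ, u ≠ [] → u ++ u <:+: X (m+1) →
    ¬ u ++ u <:+: X m → ∃ j, 2*j + 1 ≤ m ∧ u ++ u = Sq j (m-1-2*j) := by
  intro m
  induction m using Nat.strong_induction_on with
  | _ m ih =>
    intro hm u hne hin hnot
    by_cases hlow : (0:ℕ) ∈ u ∨ (1:ℕ) ∈ u
    · obtain ⟨a, han, hua⟩ := low_square hne hlow hin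
      have ha' : a = m - 1 := by
        by_contra hc
        have ha2 : a + 2 ≤ m := by omega
        apply hnot
        rw [hua]
        exact (sq_in_X a).trans (X_infix_le (by omega))
      refine ⟨0, by omega, ?_⟩
      rw [hua, ha', show m - 1 - 2*0 = m - 1 by omega, Sq_zero]
    · push_neg at hlow
      have hhigh : ∀ x ∈ u, 2 ≤ x := by
        intro x hx
        have h1 : x ≠ 0 := fun h => hlow.1 (h ▸ hx)
        have h2 : x ≠ 1 := fun h => hlow.2 (h ▸ hx)
        omega
      have hhigh2 : ∀ x ∈ u ++ u, 2 ≤ x := by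
        intro x hx
        rcases List.mem_append.mp hx with h | h <;> exact hhigh x h
      have hne2 : u ++ u ≠ [] := by simp [hne]
      obtain ⟨h3, h4⟩ := high_X (m+1) _ hne2 hhigh2 hin
      rw [show m + 1 - 2 = m - 1 by omega] at h4
      obtain ⟨w, hw, heqw⟩ := infix_map_decomp h4
      have hu'' : (u.map (· - 2)).map (· + 2) = u := by
        rw [List.map_map]
        have hpt : ∀ x ∈ u, ((· + 2) ∘ (· - 2) : ℕ → ℕ) x = id x := fun x hx => by
          have := hhigh x hx
          simp only [Function.comp_apply, id]
          omega
        rw [List.map_congr_left hpt, List.map_id]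
      have hmapuu : ((u.map (· - 2)) ++ (u.map (· - 2))).map (· + 2) = u ++ u := by
        rw [List.map_append, hu'']
      have hw2 : w = (u.map (· - 2)) ++ (u.map (· - 2)) :=
        (map_add_two_inj (by rw [hmapuu, heqw])).symm
      have huX : (u.map (· - 2)) ++ (u.map (· - 2)) <:+: X (m-1) := hw2 ▸ hw
      have hu''ne : u.map (· - 2) ≠ [] := by simp [hne]
      by_cases hm3 : 3 ≤ m
      · have hnotX : ¬ (u.map (· - 2)) ++ (u.map (· - 2)) <:+: X (m-2) := by
          intro hc
          apply hnot
          have h5 : ((u.map (· - 2)) ++ (u.map (· - 2))).map (· + 2)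
              <:+: (X (m-2)).map (· + 2) := hc.map _
          rw [hmapuu] at h5
          have h6 : (X (m-2)).map (· + 2) <:+: W (m-1) := by
            have := map_X_infix_W (m-3)
            rw [show m-3+1 = m-2 by omega, show m-3+2 = m-1 by omega] at this
            exact this
          have h7 : W (m-1) <:+: X m := by
            have := W_infix_X (m-1)
            rw [show m-1+1 = m by omega] at this
            exact this
          exact (h5.trans h6).trans h7
        obtain ⟨j, hj1, hj2⟩ := ih (m-2) (by omega) (by omega) _ hu''ne
          (by rw [show m-2+1 = m-1 by omega]; exact huX) hnotX
        refine ⟨j+1, by omega, ?_⟩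
        rw [← hmapuu, hj2, Sq_succ, show m-1-2*(j+1) = m-2-1-2*j by omega]
      · exfalso
        have hm2 : m = 2 := by omega
        subst hm2
        have hlen := huX.length_le
        rw [show (2:ℕ)-1 = 1 from rfl, X1] at hlen
        have h8 : 0 < (u.map (· - 2)).length := List.length_pos_iff.mpr hu''ne
        simp at hlen h8
        omega

lemma count_zero_W (n : ℕ) : (W n).count 0 = 1 := by
  match n with
  | 0 => decide
  | 1 => decide
  | (m+2) =>
    rw [W_eq_01]
    have h0 : (0:ℕ) ∉ (X (m+1)).map (· + 2) := by
      intro hc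
      obtain ⟨y, _, hy⟩ := List.mem_map.mp hc
      omega
    simp [List.count_cons, List.count_eq_zero.mpr h0]

lemma count_one_W (n : ℕ) : (W n).count 1 ≤ 1 := by
  match n with
  | 0 => decide
  | 1 => decide
  | (m+2) =>
    rw [W_eq_01]
    have h0 : (1:ℕ) ∉ (X (m+1)).map (· + 2) := by
      intro hc
      obtain ⟨y, _, hy⟩ := List.mem_map.mp hc
      omega
    simp [List.count_cons, List.count_eq_zero.mpr h0]

lemma square_in_W_high {k : ℕ} {u : List ℕ} (h : u ++ u <:+: W k) :
    ∀ x ∈ u, 2 ≤ x := by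
  intro x hx
  have hsub := h.sublist
  have hx0 : x ≠ 0 := by
    intro hc
    subst hc
    have h1 : 2 ≤ (u ++ u).count 0 := by
      rw [List.count_append]
      have := List.count_pos_iff.mpr hx
      omega
    have h2 := hsub.count_le 0
    rw [count_zero_W] at h2
    omega
  have hx1 : x ≠ 1 := by
    intro hc
    subst hc
    have h1 : 2 ≤ (u ++ u).count 1 := by
      rw [List.count_append]
      have := List.count_pos_iff.mpr hx
      omega
    have h2 := hsub.count_le 1
    have h3 := count_one_W k
    omega
  omega

lemma high_unmap {u : List ℕ} (hu : ∀ x ∈ u, 2 ≤ x) :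
    (u.map (· - 2)).map (· + 2) = u := by
  rw [List.map_map]
  have hpt : ∀ x ∈ u, ((· + 2) ∘ (· - 2) : ℕ → ℕ) x = id x := fun x hx => by
    have := hu x hx
    simp only [Function.comp_apply, id]
    omega
  rw [List.map_congr_left hpt, List.map_id]

lemma Sq_succ' {i : ℕ} (hi : 1 ≤ i) (b : ℕ) :
    (Sq (i-1) b).map (· + 2) = Sq i b := by
  rw [Sq_succ, show i - 1 + 1 = i by omega]


/-- For every `k ≥ 0`: for each `1 ≤ i ≤ ⌊k/2⌋`, the square `(2i ⊕ W (k-2i))²`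
(of period `|W (k-2i)| = f (k-2i+2)`) is a factor of `W (k+1)` but not of `W k`;
moreover every square factor of `W (k+1)` that is not a factor of `W k`
equals `(2i ⊕ W (k-2i))²` for some `1 ≤ i ≤ ⌊k/2⌋`. -/
theorem zww_new_squares : ∀ k : ℕ,
    (∀ i : ℕ, 1 ≤ i → i ≤ k / 2 →
      (W (k - 2 * i)).length = Nat.fib (k - 2 * i + 2) ∧
      ((W (k - 2 * i)).map (· + 2 * i) ++ (W (k - 2 * i)).map (· + 2 * i)) <:+: W (k + 1) ∧
      ¬ ((W (k - 2 * i)).map (· + 2 * i) ++ (W (k - 2 * i)).map (· + 2 * i)) <:+: W k) ∧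
    (∀ u : List ℕ, u ≠ [] → (u ++ u) <:+: W (k + 1) → ¬ (u ++ u) <:+: W k →
      ∃ i : ℕ, 1 ≤ i ∧ i ≤ k / 2 ∧
        u ++ u = (W (k - 2 * i)).map (· + 2 * i) ++ (W (k - 2 * i)).map (· + 2 * i)) := by
  intro k
  constructor
  · intro i hi1 hi2
    have h2i : 2*i ≤ k := by omega
    have hk2 : 2 ≤ k := by omega
    refine ⟨len_W _, ?_, ?_⟩
    · show Sq i (k - 2*i) <:+: W (k+1)
      obtain ⟨e1, _⟩ := ExistX (i-1) (k-1) (by omega)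
      rw [show k-1-1-2*(i-1) = k - 2*i by omega, show k-1+1 = k by omega] at e1
      have h2 : (X k).map (· + 2) <:+: W (k+1) := by
        have := map_X_infix_W (k-1)
        rw [show k-1+1 = k by omega, show k-1+2 = k+1 by omega] at this
        exact this
      rw [← Sq_succ' hi1]
      exact (e1.map _).trans h2
    · show ¬ Sq i (k - 2*i) <:+: W k
      intro hc
      obtain ⟨_, e2⟩ := ExistX (i-1) (k-1) (by omega)
      rw [show k-1-1-2*(i-1) = k - 2*i by omega] at e2
      have hhigh := Sq_high (j := i) hi1 (b := k - 2*i)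
      have hc2 : Sq i (k - 2*i) <:+: (X (k-1)).map (· + 2) := by
        have := high_infix_W (n := k-2) hhigh
          (by rw [show k-2+2 = k by omega]; exact hc)
        rw [show k-2+1 = k-1 by omega] at this
        exact this
      obtain ⟨u', hu', hequ⟩ := infix_map_decomp hc2
      rw [← Sq_succ' hi1] at hequ
      rw [← map_add_two_inj hequ] at hu'
      exact e2 hu'
  · intro u hne hin hnot
    match k with
    | 0 =>
      exfalso
      rw [W1] at hin
      have hl := hin.length_le
      have hpos : 0 < u.length := List.length_pos_iff.mpr hne
      have hu1 : u.length = 1 := by simp at hl; omega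
      have heq := hin.eq_of_length (by simp; omega)
      obtain ⟨x, hx⟩ := List.length_eq_one_iff.mp hu1
      rw [hx] at heq
      simp at heq
      omega
    | (k'+1) =>
      set k := k' + 1 with hkdef
      have hhigh := square_in_W_high hin
      have hin2 : u ++ u <:+: (X k).map (· + 2) := by
        have := high_infix_W (n := k-1) (by
          intro x hx
          rcases List.mem_append.mp hx with h | h <;> exact hhigh x h)
          (by rw [show k-1+2 = k+1 by omega]; exact hin)
        rw [show k-1+1 = k by omega] at this
        exact this
      obtain ⟨w, hw, heqw⟩ := infix_map_decomp hin2
      have hmapuu : ((u.map (· - 2)) ++ (u.map (· - 2))).map (· + 2) = u ++ u := by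
        rw [List.map_append, high_unmap hhigh]
      have hw2 : w = (u.map (· - 2)) ++ (u.map (· - 2)) :=
        (map_add_two_inj (by rw [hmapuu, heqw])).symm
      have huX : (u.map (· - 2)) ++ (u.map (· - 2)) <:+: X k := hw2 ▸ hw
      have hu''ne : u.map (· - 2) ≠ [] := by simp [hne]
      by_cases hk1 : k' = 0
      · exfalso
        have hlen := huX.length_le
        have hXk : X k = [0] := by rw [hkdef, hk1, X1]
        rw [hXk] at hlen
        have h8 : 0 < (u.map (· - 2)).length := List.length_pos_iff.mpr hu''ne
        simp at hlen h8
        omega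
      · have hk2 : 2 ≤ k := by omega
        have hnotX : ¬ (u.map (· - 2)) ++ (u.map (· - 2)) <:+: X (k-1) := by
          intro hc
          apply hnot
          have h5 := hc.map (· + 2)
          rw [hmapuu] at h5
          have h6 : (X (k-1)).map (· + 2) <:+: W k := by
            have := map_X_infix_W (k-2)
            rw [show k-2+1 = k-1 by omega, show k-2+2 = k by omega] at this
            exact this
          exact h5.trans h6
        obtain ⟨j, hj1, hj2⟩ := CompX (k-1) (by omega) _ hu''ne
          (by rw [show k-1+1 = k by omega]; exact huX) hnotX
        refine ⟨j+1, by omega, by omega, ?_⟩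
        show u ++ u = Sq (j+1) (k - 2*(j+1))
        rw [← hmapuu, hj2, Sq_succ, show k-1-1-2*j = k-2*(j+1) by omega]
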